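/- If H' is a 6-partite intersecting hypergraph with 8 edges and τ(H') = 4, then any two vertices of degree 3 in H' lie in a common edge. -/
import Mathlib


def Intersecting {V : Type*} (E : Finset (Finset V)) : Prop :=
  ∀ e ∈ E, ∀ f ∈ E, ∃ v, v ∈ e ∧ v ∈ f

def IsCover {V : Type*} (E : Finset (Finset V)) (C : Finset V) : Prop :=
  ∀ e ∈ E, ∃ v ∈ C, v ∈ e

noncomputable def coverNum {V : Type*} (E : Finset (Finset V)) : ℕ :=
  sInf {n | ∃ C : Finset V, IsCover E C ∧ C.card = n}

def Partite {V : Type*} (r : ℕ) (part : V → Fin r) (E : Finset (Finset V)) : Prop :=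
  ∀ e ∈ E, ∀ i : Fin r, (e.filter (fun v => part v = i)).card = 1

open Classical in
noncomputable def deg {V : Type*} (E : Finset (Finset V)) (v : V) : ℕ :=
  (E.filter (fun e => v ∈ e)).card

theorem stmt4 {V : Type*} (part : V → Fin 6) (E : Finset (Finset V))
    (hp : Partite 6 part E) (hi : Intersecting E) (h8 : E.card = 8)
    (hτ : coverNum E = 4) :
    ∀ u v : V, u ≠ v → deg E u = 3 → deg E v = 3 → ∃ e ∈ E, u ∈ e ∧ v ∈ e := by
  classical
  intro u v huv hu hv
  by_contra hno
  push_neg at hno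
  set A := E.filter (fun e => u ∈ e) with hA
  set B := E.filter (fun e => v ∈ e) with hB
  have hAcard : A.card = 3 := by
    have := hu; unfold deg at this; rw [hA]; convert this using 2
  have hBcard : B.card = 3 := by
    have := hv; unfold deg at this; rw [hB]; convert this using 2
  have hdisj : Disjoint A B := by
    rw [Finset.disjoint_left]
    intro e heA heB
    rw [hA, Finset.mem_filter] at heA
    rw [hB, Finset.mem_filter] at heB
    exact hno e heA.1 heA.2 heB.2
  have hsub : A ∪ B ⊆ E := by
    intro e he
    rcases Finset.mem_union.1 he with h | h
    · exact (Finset.mem_filter.1 h).1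
    · exact (Finset.mem_filter.1 h).1
  have hABcard : (A ∪ B).card = 6 := by
    rw [Finset.card_union_of_disjoint hdisj, hAcard, hBcard]
  set R := E \ (A ∪ B) with hR
  have hRcard : R.card = 2 := by
    rw [hR, Finset.card_sdiff_of_subset hsub, h8, hABcard]
  obtain ⟨e, f, hef, hRef⟩ := Finset.card_eq_two.1 hRcard
  have heR : e ∈ R := by rw [hRef]; simp
  have hfR : f ∈ R := by rw [hRef]; simp
  have heE : e ∈ E := (Finset.mem_sdiff.1 heR).1
  have hfE : f ∈ E := (Finset.mem_sdiff.1 hfR).1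
  obtain ⟨w, hwe, hwf⟩ := hi e heE f hfE
  have hue : u ∉ e := by
    have := (Finset.mem_sdiff.1 heR).2
    intro h; exact this (Finset.mem_union_left _ (Finset.mem_filter.2 ⟨heE, h⟩))
  have hve : v ∉ e := by
    have := (Finset.mem_sdiff.1 heR).2
    intro h; exact this (Finset.mem_union_right _ (Finset.mem_filter.2 ⟨heE, h⟩))
  have hwu : w ≠ u := fun h => hue (h ▸ hwe)
  have hwv : w ≠ v := fun h => hve (h ▸ hwe)
  set C : Finset V := {u, v, w} with hC
  have hcov : IsCover E C := by
    intro g hg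
    by_cases hgu : u ∈ g
    · exact ⟨u, by simp [hC], hgu⟩
    by_cases hgv : v ∈ g
    · exact ⟨v, by simp [hC], hgv⟩
    have hgR : g ∈ R := by
      rw [hR, Finset.mem_sdiff]
      refine ⟨hg, ?_⟩
      intro h
      rcases Finset.mem_union.1 h with h | h
      · exact hgu (Finset.mem_filter.1 h).2
      · exact hgv (Finset.mem_filter.1 h).2
    rw [hRef, Finset.mem_insert, Finset.mem_singleton] at hgR
    rcases hgR with rfl | rfl
    · exact ⟨w, by simp [hC], hwe⟩
    · exact ⟨w, by simp [hC], hwf⟩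
  have hCcard : C.card = 3 := by
    rw [hC]
    rw [Finset.card_insert_of_notMem (by simp [huv, hwu.symm]),
        Finset.card_insert_of_notMem (by simp [hwv.symm]), Finset.card_singleton]
  have hle : coverNum E ≤ 3 := Nat.sInf_le ⟨C, hcov, hCcard⟩
  rw [hτ] at hle
  omega
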